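/- Let R be a commutative ring, Λ an R-algebra, and G a finite group. Suppose there exists an R-linear functional λ : Λ →ₗ[R] R such that the map Λ → Hom_R(Λ, R), a ↦ (b ↦ λ(a b)), is bijective. Define ψ : MonoidAlgebra Λ G →ₗ[R] R by ψ(x) = λ(x(1)), where x(1) is the coefficient of x at the identity element of G. Then the map MonoidAlgebra Λ G → Hom_R(MonoidAlgebra Λ G, R) sending u to the functional v ↦ ψ(u * v) is bijective. In other words, if Λ is a Frobenius algebra relative to R, then so is the group algebra Λ[G] = MonoidAlgebra Λ G. -/

import Mathlib

/-- If `Λ` is a Frobenius algebra relative to `R`, witnessed by an `R`-linear functional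
`l : Λ →ₗ[R] R` for which `a ↦ (b ↦ l (a * b))` is a bijection `Λ → Hom_R(Λ, R)`, and
`G` is a finite group, then the group algebra `MonoidAlgebra Λ G` is again a Frobenius
algebra relative to `R`, witnessed by `ψ : MonoidAlgebra Λ G →ₗ[R] R`, `ψ x = l (x 1)`
(with `x 1` the coefficient at the identity of `G`). -/
theorem stmt11 (R : Type*) [CommRing R] (Λ : Type*) [Ring Λ] [Algebra R Λ]
    (G : Type*) [Group G] [Finite G]
    (l : Λ →ₗ[R] R)
    (hbij : Function.Bijective (fun a : Λ =>
      (l.comp (LinearMap.mulLeft R a) : Λ →ₗ[R] R))) :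
    Function.Bijective (fun u : MonoidAlgebra Λ G =>
      (((l.comp (Finsupp.lapply (1 : G))).comp (MonoidAlgebra.coeffLinearEquiv R).toLinearMap).comp (LinearMap.mulLeft R u) :
        MonoidAlgebra Λ G →ₗ[R] R)) := by
  classical
  have : Fintype G := Fintype.ofFinite G
  have key : ∀ (u : MonoidAlgebra Λ G) (h : G) (b : Λ),
      (((l.comp (Finsupp.lapply (1 : G))).comp (MonoidAlgebra.coeffLinearEquiv R).toLinearMap).comp
        (LinearMap.mulLeft R u : MonoidAlgebra Λ G →ₗ[R] MonoidAlgebra Λ G))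
        (MonoidAlgebra.single h b) = l (u.coeff h⁻¹ * b) := by
    intro u h b
    show l ((u * MonoidAlgebra.single h b).coeff 1) = l (u.coeff h⁻¹ * b)
    rw [MonoidAlgebra.coeff_mul_single_apply, one_mul]
  constructor
  · intro u u' huu
    ext g
    have hg : (fun a : Λ => (l.comp (LinearMap.mulLeft R a) : Λ →ₗ[R] R)) (u.coeff g)
        = (fun a : Λ => (l.comp (LinearMap.mulLeft R a) : Λ →ₗ[R] R)) (u'.coeff g) := by
      ext b
      have h1 := congrArg (fun F : MonoidAlgebra Λ G →ₗ[R] R =>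
        F (MonoidAlgebra.single g⁻¹ b)) huu
      simpa [key, inv_inv] using h1
    exact hbij.1 hg
  · intro f
    choose a ha using fun g : G => hbij.2 ((f.comp (MonoidAlgebra.lsingle g)) : Λ →ₗ[R] R)
    refine ⟨∑ g : G, MonoidAlgebra.single g⁻¹ (a g), ?_⟩
    refine MonoidAlgebra.lhom_ext' fun h => LinearMap.ext fun b => ?_
    have hcoef : (∑ g : G, MonoidAlgebra.single g⁻¹ (a g) : MonoidAlgebra Λ G).coeff h⁻¹ = a h := by
      rw [MonoidAlgebra.coeff_sum, Finsupp.finset_sum_apply]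
      rw [Finset.sum_eq_single h]
      · simp [MonoidAlgebra.coeff_single]
      · intro g _ hgh
        rw [MonoidAlgebra.coeff_single, Finsupp.single_apply, if_neg]
        intro hc
        exact hgh (inv_injective hc)
      · simp
    refine (key _ h b).trans ?_
    rw [hcoef]
    exact LinearMap.congr_fun (ha h) b
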